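/- Let A be a perfect coherent domain of characteristic p > 0 such that every finitely generated proper ideal I of A satisfies ⋂_{n>0} I^n = 0. Then every finitely generated ideal of A is tightly closed: if c ≠ 0 and c z^q ∈ I^[q] for all sufficiently large q = p^e, then z ∈ I. -/

import Mathlib

/-- A commutative ring is *coherent* if every finitely generated ideal is
finitely presented (as a module). -/
def IsCoherentRing (R : Type*) [CommRing R] : Prop :=
  ∀ I : Ideal R, I.FG → Module.FinitePresentation R I

/-- For `q` a power of the characteristic, `I^[q]` denotes the ideal generated by the
`q`-th powers of the elements of `I`. -/
def Ideal.frobPow {A : Type*} [CommRing A] (I : Ideal A) (q : ℕ) : Ideal A :=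
  Ideal.span ((fun x => x ^ q) '' (I : Set A))

open Submodule Set in
/-- In a coherent ring, the colon ideal `(I : z)` of a finitely generated ideal
is finitely generated. -/
lemma colon_fg_of_isCoherentRing {A : Type*} [CommRing A] (hcoh : IsCoherentRing A)
    (I : Ideal A) (hI : I.FG) (z : A) : (I.colon (Ideal.span {z})).FG := by
  classical
  obtain ⟨n, g, hg⟩ := Submodule.fg_iff_exists_fin_generating_family.mp hI
  -- the finitely generated ideal `I + (z)`
  set w : Fin (n + 1) → A := Fin.cons z g with hw
  set I' : Ideal A := Ideal.span (Set.range w) with hI'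
  have hI'fg : I'.FG := ⟨(Finset.univ : Finset (Fin (n + 1))).image w, by
    simp [hI', Finset.coe_image]⟩
  haveI : Module.FinitePresentation A I' := hcoh I' hI'fg
  -- the linear map `(Fin (n+1) → A) → A` given by the generators
  set f : (Fin (n + 1) → A) →ₗ[A] A := Fintype.linearCombination A w with hf
  have hrange : LinearMap.range f = I' := by
    rw [hf, Fintype.range_linearCombination]
  have hle : LinearMap.range f ≤ (I' : Submodule A A) := hrange.le
  set f' : (Fin (n + 1) → A) →ₗ[A] I' := f.codRestrict (I' : Submodule A A)
    (fun x => hle ⟨x, rfl⟩) with hf'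
  have hsurj : Function.Surjective f' := by
    rintro ⟨y, hy⟩
    rw [← hrange] at hy
    obtain ⟨x, hx⟩ := hy
    exact ⟨x, Subtype.ext hx⟩
  have hker : (LinearMap.ker f').FG :=
    Module.FinitePresentation.fg_ker f' hsurj
  have hkerf : LinearMap.ker f' = LinearMap.ker f := LinearMap.ker_codRestrict _ _ _
  have hproj : ((LinearMap.ker f).map (LinearMap.proj (0 : Fin (n + 1)))).FG := by
    rw [← hkerf]; exact hker.map _
  have key : (I.colon (Ideal.span {z}) : Submodule A A)
      = (LinearMap.ker f).map (LinearMap.proj (0 : Fin (n + 1))) := by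
    ext x
    constructor
    · intro hx
      have hxz : x * z ∈ I := Ideal.mem_colon_span_singleton.mp hx
      rw [← hg] at hxz
      obtain ⟨c, hc⟩ := (mem_span_range_iff_exists_fun A).mp hxz
      refine ⟨Fin.cons x (-c), ?_, by simp⟩
      have : f (Fin.cons x (-c)) = 0 := by
        rw [hf, Fintype.linearCombination_apply, Fin.sum_univ_succ]
        simp only [hw, Fin.cons_zero, Fin.cons_succ, smul_eq_mul, Pi.neg_apply, neg_mul]
        rw [Finset.sum_neg_distrib]
        simp only [smul_eq_mul] at hc
        rw [hc]
        ring
      exact this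
    · rintro ⟨v, hv, rfl⟩
      have hv0 : f v = 0 := hv
      rw [hf, Fintype.linearCombination_apply, Fin.sum_univ_succ] at hv0
      simp only [hw, Fin.cons_zero, Fin.cons_succ, smul_eq_mul] at hv0
      apply Ideal.mem_colon_span_singleton.mpr
      simp only [LinearMap.proj_apply]
      have : (v 0) * z = ∑ i : Fin n, (-(v i.succ)) * g i := by
        rw [eq_neg_of_add_eq_zero_left hv0]
        simp [neg_mul]
      rw [this, ← hg]
      exact Ideal.sum_mem _ fun i _ => Ideal.mul_mem_left _ _ (Ideal.subset_span ⟨i, rfl⟩)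
  rw [show (I.colon (Ideal.span {z})).FG ↔
    ((I.colon (Ideal.span {z})) : Submodule A A).FG from Iff.rfl, key]
  exact hproj

/-- Let `A` be a perfect coherent domain of characteristic `p > 0` such that
every finitely generated proper ideal `I` of `A` satisfies `⋂_{n>0} Iⁿ = 0`.  Then every
finitely generated ideal of `A` is tightly closed: if `c ≠ 0` and `c·z^q ∈ I^[q]` for all
sufficiently large `q = p^e`, then `z ∈ I`. -/
theorem mem_of_tightClosure_of_perfect_coherent
    (A : Type*) [CommRing A] [IsDomain A]
    (p : ℕ) [Fact p.Prime] [CharP A p] [PerfectRing A p]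
    (hcoh : IsCoherentRing A)
    (hkrull : ∀ I : Ideal A, I.FG → I ≠ ⊤ → (⨅ n : ℕ, I ^ (n + 1)) = ⊥)
    (I : Ideal A) (hI : I.FG) (z c : A) (hc : c ≠ 0) (E : ℕ)
    (h : ∀ e : ℕ, E ≤ e → c * z ^ p ^ e ∈ I.frobPow (p ^ e)) :
    z ∈ I := by
  set J : Ideal A := I.colon (Ideal.span {z}) with hJ
  have hJfg : J.FG := colon_fg_of_isCoherentRing hcoh I hI z
  -- key: for all e ≥ E, c ∈ J ^ (p ^ e)
  have key : ∀ e : ℕ, E ≤ e → c ∈ J ^ (p ^ e) := by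
    intro e he
    set σ : A ≃+* A := iterateFrobeniusEquiv A p e with hσ
    have hfrob : I.frobPow (p ^ e) = I.map (σ : A →+* A) := by
      have hfun : (fun x : A => x ^ p ^ e) = ⇑(σ : A →+* A) := by
        funext a
        simp [hσ, coe_iterateFrobeniusEquiv, iterateFrobenius_def]
      rw [Ideal.frobPow, Ideal.map, hfun]
    set b : A := σ.symm c with hb
    have hbz : b * z ∈ I := by
      have h1 : c * z ^ p ^ e ∈ I.map (σ : A →+* A) := hfrob ▸ h e he
      rw [Ideal.map_comap_of_equiv] at h1
      have h2 : σ.symm (c * z ^ p ^ e) ∈ I := h1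
      rw [map_mul] at h2
      have hz : σ.symm (z ^ p ^ e) = z := by
        apply σ.injective
        rw [RingEquiv.apply_symm_apply, hσ, iterateFrobeniusEquiv_apply, iterateFrobenius_def]
      rwa [hz] at h2
    have hbJ : b ∈ J := Ideal.mem_colon_span_singleton.mpr hbz
    have hcb : c = b ^ p ^ e := by
      rw [hb]
      have := σ.apply_symm_apply c
      rw [hσ, iterateFrobeniusEquiv_apply, iterateFrobenius_def] at this
      exact this.symm
    rw [hcb]
    exact Ideal.pow_mem_pow hbJ _
  -- conclude `J = ⊤`
  by_contra hz
  have hJne : J ≠ ⊤ := by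
    intro htop
    apply hz
    have h1 : (1 : A) ∈ J := htop ▸ Submodule.mem_top
    have h2 := Ideal.mem_colon_span_singleton.mp h1
    rwa [one_mul] at h2
  have hbot : (⨅ n : ℕ, J ^ (n + 1)) = ⊥ := hkrull J hJfg hJne
  have hcbot : c ∈ (⨅ n : ℕ, J ^ (n + 1)) := by
    rw [Submodule.mem_iInf]
    intro n
    have he : E ≤ max E (n + 1) := le_max_left _ _
    have hq : n + 1 ≤ p ^ (max E (n + 1)) := by
      calc n + 1 ≤ max E (n + 1) := le_max_right _ _
        _ ≤ p ^ (max E (n + 1)) :=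
          le_of_lt (Nat.lt_pow_self (Fact.out : p.Prime).one_lt)
    exact Ideal.pow_le_pow_right hq (key _ he)
  rw [hbot] at hcbot
  exact hc (by simpa using hcbot)
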